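/- Let w ∈ 𝔚_p, let α ∈ (Φ⁺ \ Φ_p⁺) ∩ w⁻¹Φ⁻, and let α_j ∈ Δ_p be such that α + α_j ∈ Φ⁺ \ Φ_p⁺. Then α + α_j ∈ (Φ⁺ \ Φ_p⁺) ∩ w⁻¹Φ⁻, i.e., w(α + α_j) ∈ Φ⁻. -/

import Mathlib

open scoped Classical RealInnerProductSpace

noncomputable section

namespace Weng

/-- The completed Riemann zeta function `ζ̂(s) = π^(-s/2) Γ(s/2) ζ(s)`. -/
def zetaHat (s : ℂ) : ℂ := completedRiemannZeta s

/-- The entire Riemann xi function `ξ(s) = s (s-1) ζ̂(s)`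
(written in terms of the entire function `Λ₀` so that the removable singularities
at `s = 0, 1` are correctly filled in). -/
def xi (s : ℂ) : ℂ := s * (s - 1) * completedRiemannZeta₀ s + 1

variable (V : Type) [NormedAddCommGroup V] [InnerProductSpace ℝ V] [FiniteDimensional ℝ V]

/-- The coroot `α^∨ = 2 α / ⟨α, α⟩` of a vector `α`. -/
def coroot (α : V) : V := (2 / ⟪α, α⟫) • α

/-- Reflection in the hyperplane orthogonal to `α`. -/
def srefl (α : V) : V ≃ₗᵢ[ℝ] V := Submodule.reflection (ℝ ∙ α)ᗮ

variable {V}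

/-- A reduced irreducible crystallographic root system `Φ` in a finite dimensional real
inner product space `V`, together with a fundamental system `Δ = {α_1, …, α_r}` (indexed by
`Fin r`), the corresponding positive system `Φ⁺` (`Pos`), and the fundamental weights
`λ_1, …, λ_r` (`fw`). -/
structure RootSystemData (V : Type) [NormedAddCommGroup V] [InnerProductSpace ℝ V]
    [FiniteDimensional ℝ V] : Type where
  /-- the rank -/
  r : ℕ
  /-- the root system -/
  Φ : Finset V
  /-- the simple roots -/
  Δ : Fin r → V
  /-- the positive roots -/
  Pos : Finset V
  /-- the fundamental weights -/
  fw : Fin r → V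
  hΔinj : Function.Injective Δ
  hΔPos : ∀ j, Δ j ∈ Pos
  hspan : Submodule.span ℝ (Φ : Set V) = ⊤
  hzero : (0 : V) ∉ Φ
  hreduced : ∀ α ∈ Φ, ∀ t : ℝ, t • α ∈ (Φ : Set V) → t = 1 ∨ t = -1
  hcrys : ∀ α ∈ Φ, ∀ β ∈ Φ, ∃ n : ℤ, ⟪β, coroot V α⟫ = (n : ℝ)
  hrefl : ∀ α ∈ Φ, ∀ β ∈ Φ, β - ⟪β, coroot V α⟫ • α ∈ Φ
  hirred : ∀ S T : Finset V, S ∪ T = Φ → (∀ a ∈ S, ∀ b ∈ T, ⟪a, b⟫ = 0) →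
    S = ∅ ∨ T = ∅
  hPosSub : Pos ⊆ Φ
  hNegSub : ∀ α ∈ Pos, -α ∈ Φ
  hPosDec : ∀ α ∈ Φ, (α ∈ Pos ∧ -α ∉ Pos) ∨ (α ∉ Pos ∧ -α ∈ Pos)
  hPosComb : ∀ α ∈ Pos, ∃ c : Fin r → ℕ, α = ∑ j, (c j : ℝ) • Δ j
  hfw : ∀ i j, ⟪fw i, coroot V (Δ j)⟫ = if i = j then 1 else 0

namespace RootSystemData

variable {V : Type} [NormedAddCommGroup V] [InnerProductSpace ℝ V] [FiniteDimensional ℝ V]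
variable (d : RootSystemData V)

/-- The set `Φ⁻ = -Φ⁺` of negative roots, as a `Finset`. -/
def NegS : Finset V := d.Pos.image (fun α => -α)

/-- The Weyl vector `ρ = (1/2) Σ_{α ∈ Φ⁺} α`. -/
def rho : V := (2⁻¹ : ℝ) • ∑ α ∈ d.Pos, α

/-- The height `ht α^∨ = ⟨ρ, α^∨⟩` of the coroot of `α`. -/
def ht (α : V) : ℝ := ⟪d.rho, coroot V α⟫

/-- The Weyl group `W`, as the subgroup of the group of linear isometries of `V`
generated by the reflections in the simple roots. -/
def W : Subgroup (V ≃ₗᵢ[ℝ] V) := Subgroup.closure (Set.range fun j => srefl V (d.Δ j))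

/-- The subset `Δ_p = Δ \ {α_p}` of the simple roots, as a set of vectors. -/
def DeltaP (p : Fin d.r) : Set V := d.Δ '' {j | j ≠ p}

/-- `Δ_p` as a `Finset`. -/
def DeltaPFin (p : Fin d.r) : Finset V := (Finset.univ.filter (fun j => j ≠ p)).image d.Δ

/-- The subgroup `W_p` of `W` generated by the reflections in the simple roots in `Δ_p`. -/
def Wp (p : Fin d.r) : Subgroup (V ≃ₗᵢ[ℝ] V) :=
  Subgroup.closure ((fun j => srefl V (d.Δ j)) '' {j | j ≠ p})

/-- The root subsystem `Φ_p = Φ ∩ span_ℝ(Δ_p)`. -/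
def PhiP (p : Fin d.r) : Finset V :=
  d.Φ.filter (fun α => α ∈ Submodule.span ℝ (d.DeltaP p))

/-- The positive system `Φ_p⁺ = Φ⁺ ∩ Φ_p` of `Φ_p`. -/
def PhiPpos (p : Fin d.r) : Finset V := d.Pos ∩ d.PhiP p

/-- `ρ_p = (1/2) Σ_{α ∈ Φ_p⁺} α`. -/
def rhoP (p : Fin d.r) : V := (2⁻¹ : ℝ) • ∑ α ∈ d.PhiPpos p, α

/-- The constant `c_p = 2 ⟨λ_p - ρ_p, α_p^∨⟩`. -/
def cp (p : Fin d.r) : ℝ := 2 * ⟪d.fw p - d.rhoP p, coroot V (d.Δ p)⟫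

/-- The set `𝔚_p = {w ∈ W : Δ_p ⊆ w⁻¹(Δ ∪ Φ⁻)}`. -/
def frakW (p : Fin d.r) : Set (V ≃ₗᵢ[ℝ] V) :=
  {w | w ∈ d.W ∧ ∀ j : Fin d.r, j ≠ p →
    (w (d.Δ j) ∈ Set.range d.Δ ∨ w (d.Δ j) ∈ d.NegS)}

/-- `l_p(w) = |(Φ⁺ \ Φ_p⁺) ∩ w⁻¹ Φ⁻|`. -/
def lp (p : Fin d.r) (w : V ≃ₗᵢ[ℝ] V) : ℕ :=
  ((d.Pos \ d.PhiPpos p).filter (fun α => w α ∈ d.NegS)).card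

/-- `N_{p,w}(k,h) = #{α ∈ w⁻¹Φ⁻ : ⟨λ_p, α^∨⟩ = k, ht α^∨ = h}`. -/
def Npw (p : Fin d.r) (w : V ≃ₗᵢ[ℝ] V) (k h : ℝ) : ℕ :=
  (d.Φ.filter (fun α => w α ∈ d.NegS ∧ ⟪d.fw p, coroot V α⟫ = k ∧ d.ht α = h)).card

/-- `N_p(k,h) = #{α ∈ Φ : ⟨λ_p, α^∨⟩ = k, ht α^∨ = h}`. -/
def Np (p : Fin d.r) (k h : ℝ) : ℕ :=
  (d.Φ.filter (fun α => ⟪d.fw p, coroot V α⟫ = k ∧ d.ht α = h)).card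

/-- `M_p(k,h) = max_{w ∈ 𝔚_p} (N_{p,w}(k,h-1) - N_{p,w}(k,h))`. -/
def Mp (p : Fin d.r) (k h : ℝ) : ℤ :=
  sSup {n : ℤ | ∃ w ∈ d.frakW p, n = (d.Npw p w k (h - 1) : ℤ) - (d.Npw p w k h : ℤ)}

/-- The period `ω_p(s)`. -/
def omegaP (p : Fin d.r) (s : ℂ) : ℂ :=
  ∑ᶠ w ∈ d.frakW p,
    (∏ α ∈ d.Φ.filter (fun α => w α ∈ Set.range d.Δ ∧ α ∉ d.DeltaP p),
        ((⟪d.fw p, coroot V α⟫ : ℂ) * s + (d.ht α : ℂ) - 1)⁻¹) *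
    (∏ α ∈ d.Pos.filter (fun α => w α ∈ d.NegS ∧ α ∉ d.DeltaP p),
        zetaHat ((⟪d.fw p, coroot V α⟫ : ℂ) * s + (d.ht α : ℂ))) *
    (∏ α ∈ d.Φ.filter (fun α => -α ∈ d.Pos ∧ w (-α) ∈ d.NegS),
        (zetaHat ((⟪d.fw p, coroot V α⟫ : ℂ) * s + (d.ht α : ℂ)))⁻¹)

/-- The Weng zeta function
`ζ̂_p(s) = ω_p(s) ∏_{k ≥ 0} ∏_{h ≥ 2} ζ̂(k s + h)^{M_p(k,h)}`
(the product is finite: `M_p(k,h) = 0` outside of the displayed finite range). -/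
def zetaWeng (p : Fin d.r) (s : ℂ) : ℂ :=
  d.omegaP p s *
    ∏ k ∈ Finset.range (d.Φ.card + 2), ∏ h ∈ Finset.range (d.Φ.card + 2),
      (if 2 ≤ h then zetaHat ((k : ℂ) * s + (h : ℂ)) ^ (d.Mp p (k : ℝ) (h : ℝ)) else 1)


/-- `δ_{α,w} = 1` if `α ∈ w⁻¹Φ⁺`, and `δ_{α,w} = 0` if `α ∈ w⁻¹Φ⁻`. -/
def deltaIdx (w : V ≃ₗᵢ[ℝ] V) (α : V) : ℕ := if w α ∈ d.Pos then 1 else 0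

/-- `X̃_{p,w}(s) = ξ(2)^{|Δ_p ∩ w⁻¹Φ⁺|} ∏_{α ∈ Φ⁺ \ Δ_p} ξ(⟨λ_p,α^∨⟩ s + ht α^∨ + δ_{α,w})`. -/
def Xtilde (p : Fin d.r) (w : V ≃ₗᵢ[ℝ] V) (s : ℂ) : ℂ :=
  xi 2 ^ ((d.DeltaPFin p).filter (fun α => w α ∈ d.Pos)).card *
  ∏ α ∈ d.Pos.filter (fun α => α ∉ d.DeltaP p),
    xi ((⟪d.fw p, coroot V α⟫ : ℂ) * s + (d.ht α : ℂ) + (d.deltaIdx w α : ℂ))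

/-- The polynomial factor attached to a single `v ∈ 𝔚_p` appearing in `Q̃_{p,w}` and `Q_p`. -/
def Qfactor (p : Fin d.r) (v : V ≃ₗᵢ[ℝ] V) (s : ℂ) : ℂ :=
  (2 : ℂ) ^ ((d.DeltaPFin p).filter (fun α => v α ∈ d.Pos)).card *
  (∏ α ∈ d.Φ.filter (fun α => v α ∈ Set.range d.Δ ∧ α ∉ d.DeltaP p),
      ((⟪d.fw p, coroot V α⟫ : ℂ) * s + (d.ht α : ℂ) - 1)) *
  ∏ α ∈ d.Pos.filter (fun α => α ∉ d.DeltaP p),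
    ((⟪d.fw p, coroot V α⟫ : ℂ) * s + (d.ht α : ℂ) + (d.deltaIdx v α : ℂ)) *
      ((⟪d.fw p, coroot V α⟫ : ℂ) * s + (d.ht α : ℂ) + (d.deltaIdx v α : ℂ) - 1)

/-- The polynomial `Q̃_{p,w}(s)` (product of the `Qfactor`s over all `v ∈ 𝔚_p`, `v ≠ w`). -/
def Qtilde (p : Fin d.r) (w : V ≃ₗᵢ[ℝ] V) (s : ℂ) : ℂ :=
  ∏ᶠ v ∈ d.frakW p \ {w}, d.Qfactor p v s

/-- The polynomial `Q_p(s)` (product of the `Qfactor`s over all `v ∈ 𝔚_p`). -/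
def Qp (p : Fin d.r) (s : ℂ) : ℂ := ∏ᶠ v ∈ d.frakW p, d.Qfactor p v s

/-- The entire function `X_p(s) = Σ_{w ∈ 𝔚_p} Q̃_{p,w}(s) X̃_{p,w}(s)`. -/
def Xp (p : Fin d.r) (s : ℂ) : ℂ := ∑ᶠ w ∈ d.frakW p, d.Qtilde p w s * d.Xtilde p w s

/-- `X_{p,w}(s) = ∏_{α ∈ Φ⁺ \ Φ_p⁺} ξ(⟨λ_p,α^∨⟩ s + ht α^∨ + δ_{α,w})`. -/
def Xpw (p : Fin d.r) (w : V ≃ₗᵢ[ℝ] V) (s : ℂ) : ℂ :=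
  ∏ α ∈ d.Pos \ d.PhiPpos p,
    xi ((⟪d.fw p, coroot V α⟫ : ℂ) * s + (d.ht α : ℂ) + (d.deltaIdx w α : ℂ))

/-- The constant `C_{p,w} = ξ(2)^{|Δ_p ∩ w⁻¹Φ⁺|} ∏_{α ∈ Φ_p⁺ \ Δ_p} ξ(ht α^∨ + δ_{α,w})`. -/
def Cpw (p : Fin d.r) (w : V ≃ₗᵢ[ℝ] V) : ℂ :=
  xi 2 ^ ((d.DeltaPFin p).filter (fun α => w α ∈ d.Pos)).card *
  ∏ α ∈ (d.PhiPpos p).filter (fun α => α ∉ d.DeltaP p),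
    xi ((d.ht α : ℂ) + (d.deltaIdx w α : ℂ))

/-- `Q_{p,w}(s) = C_{p,w} Q̃_{p,w}(s)`. -/
def Qpw (p : Fin d.r) (w : V ≃ₗᵢ[ℝ] V) (s : ℂ) : ℂ := d.Cpw p w * d.Qtilde p w s

/-- `𝔚_p⁺ = {w ∈ 𝔚_p : l_p(w) < |Φ⁺ \ Φ_p⁺| / 2}`. -/
def frakWplus (p : Fin d.r) : Set (V ≃ₗᵢ[ℝ] V) :=
  {w ∈ d.frakW p | 2 * d.lp p w < (d.Pos \ d.PhiPpos p).card}

/-- `𝔚_p⁰ = {w ∈ 𝔚_p : l_p(w) = |Φ⁺ \ Φ_p⁺| / 2}`. -/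
def frakWzero (p : Fin d.r) : Set (V ≃ₗᵢ[ℝ] V) :=
  {w ∈ d.frakW p | 2 * d.lp p w = (d.Pos \ d.PhiPpos p).card}

/-- `𝔚_p‡ = {w ∈ 𝔚_p : l_p(w) = 0}`. -/
def frakWdag (p : Fin d.r) : Set (V ≃ₗᵢ[ℝ] V) :=
  {w ∈ d.frakW p | d.lp p w = 0}

/-- `E_p(s) = Σ_{w ∈ 𝔚_p⁺} Q_{p,w}(s) X_{p,w}(s) + (1/2) Σ_{w ∈ 𝔚_p⁰} Q_{p,w}(s) X_{p,w}(s)`. -/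
def Ep (p : Fin d.r) (s : ℂ) : ℂ :=
  (∑ᶠ w ∈ d.frakWplus p, d.Qpw p w s * d.Xpw p w s) +
    (2 : ℂ)⁻¹ * ∑ᶠ w ∈ d.frakWzero p, d.Qpw p w s * d.Xpw p w s

end RootSystemData

end Weng

open Weng

section Aux

variable {V : Type} [NormedAddCommGroup V] [InnerProductSpace ℝ V] [FiniteDimensional ℝ V]

lemma srefl_apply' (α x : V) : srefl V α x = x - ⟪x, coroot V α⟫ • α := by
  by_cases hα : α = 0
  · subst hα
    have hx : x ∈ ((ℝ ∙ (0:V))ᗮ) := by simp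
    rw [srefl, smul_zero, sub_zero]
    exact Submodule.reflection_mem_subspace_eq_self hx
  · have hαα : ⟪α, α⟫ ≠ 0 := inner_self_ne_zero.mpr hα
    set c : ℝ := ⟪x, α⟫ / ⟪α, α⟫ with hc
    have h1 : x - c • α ∈ (ℝ ∙ α)ᗮ := by
      rw [Submodule.mem_orthogonal_singleton_iff_inner_right]
      rw [inner_sub_right, inner_smul_right, hc, div_mul_cancel₀ _ hαα,
        real_inner_comm, sub_self]
    have h2 : c • α ∈ ((ℝ ∙ α)ᗮ)ᗮ :=
      Submodule.smul_mem _ _ ((ℝ ∙ α).le_orthogonal_orthogonal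
        (Submodule.mem_span_singleton_self α))
    have hx : x = (x - c • α) + c • α := by abel
    have hrefl : srefl V α x = (x - c • α) + (- (c • α)) := by
      rw [srefl]
      nth_rewrite 1 [hx]
      rw [map_add, Submodule.reflection_mem_subspace_eq_self h1,
        Submodule.reflection_mem_subspace_orthogonalComplement_eq_neg h2]
    have hcor : ⟪x, coroot V α⟫ = 2 * c := by
      rw [coroot, inner_smul_right, hc]; field_simp
    rw [hrefl, hcor, two_mul, add_smul]
    abel

lemma srefl_sq (α : V) : srefl V α * srefl V α = 1 := by
  ext x
  show srefl V α (srefl V α x) = x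
  exact Submodule.reflection_reflection (ℝ ∙ α)ᗮ x

namespace Weng.RootSystemData

variable (d : RootSystemData V)

lemma maps_phi {w : V ≃ₗᵢ[ℝ] V} (hw : w ∈ d.W) : ∀ β ∈ d.Φ, w β ∈ d.Φ := by
  have key : (∀ β ∈ d.Φ, w β ∈ d.Φ) ∧ (∀ β ∈ d.Φ, w⁻¹ β ∈ d.Φ) := by
    refine Subgroup.closure_induction
      (p := fun x _ => (∀ β ∈ d.Φ, x β ∈ d.Φ) ∧ (∀ β ∈ d.Φ, x⁻¹ β ∈ d.Φ)) ?_ ?_ ?_ ?_ hw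
    · rintro x ⟨i, rfl⟩
      have hgen : ∀ β ∈ d.Φ, srefl V (d.Δ i) β ∈ d.Φ := by
        intro β hβ
        rw [srefl_apply']
        exact d.hrefl _ (d.hPosSub (d.hΔPos i)) _ hβ
      have hinv : (srefl V (d.Δ i))⁻¹ = srefl V (d.Δ i) :=
        inv_eq_of_mul_eq_one_left (srefl_sq _)
      exact ⟨hgen, by rw [hinv]; exact hgen⟩
    · exact ⟨fun β hβ => hβ, fun β hβ => hβ⟩
    · rintro x y _ _ ⟨hx1, hx2⟩ ⟨hy1, hy2⟩
      constructor
      · intro β hβ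
        have : (x * y) β = x (y β) := rfl
        rw [this]; exact hx1 _ (hy1 _ hβ)
      · intro β hβ
        rw [mul_inv_rev]
        have : (y⁻¹ * x⁻¹) β = y⁻¹ (x⁻¹ β) := rfl
        rw [this]; exact hy2 _ (hx2 _ hβ)
    · rintro x _ ⟨hx1, hx2⟩
      exact ⟨hx2, by simpa using hx1⟩
  exact key.1

lemma pos_ne_zero {α : V} (hα : α ∈ d.Pos) : α ≠ 0 := by
  intro h; exact d.hzero (h ▸ d.hPosSub hα)

lemma delta_ne_zero (i : Fin d.r) : d.Δ i ≠ 0 := d.pos_ne_zero (d.hΔPos i)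

lemma inner_fw_delta (i k : Fin d.r) :
    ⟪d.fw i, d.Δ k⟫ = if i = k then ⟪d.Δ k, d.Δ k⟫ / 2 else 0 := by
  have h := d.hfw i k
  rw [coroot, inner_smul_right] at h
  have hkk : ⟪d.Δ k, d.Δ k⟫ ≠ 0 := inner_self_ne_zero.mpr (d.delta_ne_zero k)
  have hne : (2:ℝ) / ⟪d.Δ k, d.Δ k⟫ ≠ 0 := div_ne_zero two_ne_zero hkk
  by_cases hik : i = k
  · rw [if_pos hik] at h ⊢
    field_simp at h ⊢
    linarith
  · rw [if_neg hik] at h ⊢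
    rcases mul_eq_zero.mp h with h' | h'
    · exact absurd h' hne
    · exact h'

lemma inner_fw_pos (k : Fin d.r) {α : V} (hα : α ∈ d.Pos) :
    ∃ c : ℕ, ⟪d.fw k, α⟫ = (c : ℝ) * (⟪d.Δ k, d.Δ k⟫ / 2) := by
  obtain ⟨c, hc⟩ := d.hPosComb α hα
  refine ⟨c k, ?_⟩
  rw [hc, inner_sum]
  rw [Finset.sum_eq_single k]
  · rw [inner_smul_right, d.inner_fw_delta k k, if_pos rfl]
  · intro m _ hm
    rw [inner_smul_right, d.inner_fw_delta k m, if_neg (Ne.symm hm), mul_zero]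
  · intro h; exact absurd (Finset.mem_univ k) h

lemma inner_fw_pos_nonneg (k : Fin d.r) {α : V} (hα : α ∈ d.Pos) : 0 ≤ ⟪d.fw k, α⟫ := by
  obtain ⟨c, hc⟩ := d.inner_fw_pos k hα
  rw [hc]
  have : (0:ℝ) ≤ ⟪d.Δ k, d.Δ k⟫ := real_inner_self_nonneg
  positivity

lemma inner_sum_fw_pos {α : V} (hα : α ∈ d.Pos) : 0 < ⟪∑ k, d.fw k, α⟫ := by
  obtain ⟨c, hc⟩ := d.hPosComb α hα
  have hsum : ⟪∑ k, d.fw k, α⟫ = ∑ k, ⟪d.fw k, α⟫ := sum_inner _ _ _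
  rw [hsum]
  rcases (Finset.sum_nonneg fun k (_ : k ∈ Finset.univ) =>
      d.inner_fw_pos_nonneg (α := α) k hα).lt_or_eq with h | h
  · exact h
  · exfalso
    apply d.pos_ne_zero hα
    have hzero : ∀ k : Fin d.r, ⟪d.fw k, α⟫ = 0 := by
      intro k
      exact (Finset.sum_eq_zero_iff_of_nonneg
        (fun k _ => d.inner_fw_pos_nonneg (α := α) k hα)).mp h.symm k (Finset.mem_univ k)
    have hck : ∀ k : Fin d.r, (c k : ℝ) = 0 := by
      intro k
      have hval : ⟪d.fw k, α⟫ = (c k : ℝ) * (⟪d.Δ k, d.Δ k⟫ / 2) := by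
        rw [hc, inner_sum, Finset.sum_eq_single k]
        · rw [inner_smul_right, d.inner_fw_delta k k, if_pos rfl]
        · intro m _ hm
          rw [inner_smul_right, d.inner_fw_delta k m, if_neg (Ne.symm hm), mul_zero]
        · intro h'; exact absurd (Finset.mem_univ k) h'
      rw [hzero k] at hval
      have hkk : ⟪d.Δ k, d.Δ k⟫ ≠ 0 := inner_self_ne_zero.mpr (d.delta_ne_zero k)
      have h2 : (c k : ℝ) * ⟪d.Δ k, d.Δ k⟫ = 0 := by linarith [hval.symm]
      rcases mul_eq_zero.mp h2 with h' | h'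
      · exact h'
      · exact absurd h' hkk
    rw [hc]
    apply Finset.sum_eq_zero
    intro k _
    rw [hck k, zero_smul]

lemma eq_nat_smul_delta {α : V} (hα : α ∈ d.Pos) (i : Fin d.r)
    (h : ∀ k, k ≠ i → ⟪d.fw k, α⟫ = 0) :
    ∃ c : ℕ, 1 ≤ c ∧ α = (c : ℝ) • d.Δ i := by
  obtain ⟨c, hc⟩ := d.hPosComb α hα
  have hck : ∀ k, k ≠ i → (c k : ℝ) = 0 := by
    intro k hk
    have : ⟪d.fw k, α⟫ = (c k : ℝ) * (⟪d.Δ k, d.Δ k⟫ / 2) := by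
      rw [hc, inner_sum, Finset.sum_eq_single k]
      · rw [inner_smul_right, d.inner_fw_delta k k, if_pos rfl]
      · intro m _ hm
        rw [inner_smul_right, d.inner_fw_delta k m, if_neg (Ne.symm hm), mul_zero]
      · intro h'; exact absurd (Finset.mem_univ k) h'
    rw [h k hk] at this
    have hkk : ⟪d.Δ k, d.Δ k⟫ ≠ 0 := inner_self_ne_zero.mpr (d.delta_ne_zero k)
    have h2 : (c k : ℝ) * ⟪d.Δ k, d.Δ k⟫ = 0 := by linarith [this.symm]
    rcases mul_eq_zero.mp h2 with h' | h'
    · exact h'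
    · exact absurd h' hkk
  have hαeq : α = (c i : ℝ) • d.Δ i := by
    rw [hc, Finset.sum_eq_single i]
    · intro m _ hm
      rw [hck m hm, zero_smul]
    · intro h'; exact absurd (Finset.mem_univ i) h'
  refine ⟨c i, ?_, hαeq⟩
  rcases Nat.eq_zero_or_pos (c i) with h0 | h1
  · exfalso
    apply d.pos_ne_zero hα
    rw [hαeq, h0]; simp
  · exact h1

lemma mem_NegS_iff {β : V} : β ∈ d.NegS ↔ -β ∈ d.Pos := by
  constructor
  · rintro hβ
    rw [NegS, Finset.mem_image] at hβ
    obtain ⟨γ, hγ, rfl⟩ := hβ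
    simpa using hγ
  · intro h
    rw [NegS, Finset.mem_image]
    exact ⟨-β, h, by simp⟩

end Weng.RootSystemData

end Aux

/-- Let `w ∈ 𝔚_p`, `α ∈ (Φ⁺ \ Φ_p⁺) ∩ w⁻¹Φ⁻`, and `α_j ∈ Δ_p` with
`α + α_j ∈ Φ⁺ \ Φ_p⁺`. Then `α + α_j ∈ (Φ⁺ \ Φ_p⁺) ∩ w⁻¹Φ⁻`, i.e. `w(α + α_j) ∈ Φ⁻`. -/
theorem weng_add_simple_root_stays_negative
    {V : Type} [NormedAddCommGroup V] [InnerProductSpace ℝ V] [FiniteDimensional ℝ V]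
    (d : RootSystemData V) (p : Fin d.r)
    (w : V ≃ₗᵢ[ℝ] V) (hw : w ∈ d.frakW p)
    (α : V) (hα : α ∈ d.Pos \ d.PhiPpos p) (hwα : w α ∈ d.NegS)
    (j : Fin d.r) (hj : j ≠ p) (hsum : α + d.Δ j ∈ d.Pos \ d.PhiPpos p) :
    w (α + d.Δ j) ∈ d.NegS := by
  classical
  set β := α + d.Δ j with hβdef
  have hβPos : β ∈ d.Pos := (Finset.mem_sdiff.mp hsum).1
  have hβΦ : β ∈ d.Φ := d.hPosSub hβPos
  have hwβΦ : w β ∈ d.Φ := d.maps_phi hw.1 β hβΦ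
  rcases d.hPosDec _ hwβΦ with ⟨hwβPos, _⟩ | ⟨_, hneg⟩
  · -- contradiction case : w β ∈ Pos
    exfalso
    -- w α = -γ with γ ∈ Pos
    have hγ : -(w α) ∈ d.Pos := d.mem_NegS_iff.mp hwα
    -- w (Δ j) = w β - w α = w β + (-(w α))
    have hwj : w (d.Δ j) = w β + (-(w α)) := by
      rw [hβdef, map_add]; abel
    rcases hw.2 j hj with hrange | hnegS
    · -- w (Δ j) = Δ i : simple root equals sum of two positive roots
      obtain ⟨i, hi⟩ := hrange
      have heq : w β + (-(w α)) = d.Δ i := by rw [← hwj, hi]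
      have hzero : ∀ k, k ≠ i → ⟪d.fw k, w β⟫ = 0 ∧ ⟪d.fw k, -(w α)⟫ = 0 := by
        intro k hk
        have h1 : 0 ≤ ⟪d.fw k, w β⟫ := d.inner_fw_pos_nonneg k hwβPos
        have h2 : 0 ≤ ⟪d.fw k, -(w α)⟫ := d.inner_fw_pos_nonneg k hγ
        have h3 : ⟪d.fw k, w β⟫ + ⟪d.fw k, -(w α)⟫ = 0 := by
          rw [← inner_add_right, heq, d.inner_fw_delta k i, if_neg hk]
        constructor <;> linarith
      obtain ⟨a, ha1, ha2⟩ := d.eq_nat_smul_delta hwβPos i (fun k hk => (hzero k hk).1)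
      obtain ⟨b, hb1, hb2⟩ := d.eq_nat_smul_delta hγ i (fun k hk => (hzero k hk).2)
      have : ((a + b : ℕ) : ℝ) • d.Δ i = (1 : ℝ) • d.Δ i := by
        push_cast
        rw [add_smul, ← ha2, ← hb2, heq, one_smul]
      have hab : ((a + b : ℕ) : ℝ) = 1 :=
        smul_left_injective ℝ (d.delta_ne_zero i) this
      have : a + b = 1 := by exact_mod_cast hab
      omega
    · -- w (Δ j) ∈ NegS : sum of three positive roots is zero
      have hδ : -(w (d.Δ j)) ∈ d.Pos := d.mem_NegS_iff.mp hnegS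
      have heq : w β + (-(w α)) + (-(w (d.Δ j))) = 0 := by rw [← hwj]; abel
      have h1 := d.inner_sum_fw_pos hwβPos
      have h2 := d.inner_sum_fw_pos hγ
      have h3 := d.inner_sum_fw_pos hδ
      have : ⟪∑ k, d.fw k, w β⟫ + ⟪∑ k, d.fw k, -(w α)⟫ + ⟪∑ k, d.fw k, -(w (d.Δ j))⟫
          = 0 := by
        rw [← inner_add_right, ← inner_add_right, heq, inner_zero_right]
      linarith
  · exact d.mem_NegS_iff.mpr hneg
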